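/- Let π ≤ ρ be noncrossing partitions of {1,…,n} (reverse refinement order). Then ζ(π,ρ) := Π_{B∈ρ} wt(π|_B) equals Π_{(i,j)∈arc(π)} δ_{m(i,j)}, where m(i,j) = #{k : i<k<j and i ∼_ρ k ∼_ρ j}. -/

import Mathlib

open Finset

noncomputable section
open scoped Classical

/-- The ground set {1, ..., n}. -/
def ground (n : ℕ) : Finset ℕ := Finset.Icc 1 n

/-- `i` and `j` lie in a common block of the partition `π`. -/
def SameBlock {s : Finset ℕ} (π : Finpartition s) (i j : ℕ) : Prop :=
  ∃ B ∈ π.parts, i ∈ B ∧ j ∈ B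

/-- A partition is noncrossing if there are no `i<j<k<l` with `i∼k`, `j∼l`, `j≁k`. -/
def Noncrossing {s : Finset ℕ} (π : Finpartition s) : Prop :=
  ∀ i j k l : ℕ, i < j → j < k → k < l →
    SameBlock π i k → SameBlock π j l → SameBlock π j k

/-- `(i,j)` is an arc of `π`: `i<j`, `i∼j`, and no `k` strictly between with `i∼k∼j`. -/
def IsArc {s : Finset ℕ} (π : Finpartition s) (i j : ℕ) : Prop :=
  i < j ∧ SameBlock π i j ∧ ¬ ∃ k, i < k ∧ k < j ∧ SameBlock π i k ∧ SameBlock π k j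

/-- The set of arcs of `π`. -/
def arcs {s : Finset ℕ} (π : Finpartition s) : Finset (ℕ × ℕ) :=
  (s ×ˢ s).filter fun p => IsArc π p.1 p.2
/-- The multiplicative extension of Yoshida's weight:
`ζ(π,ρ) = ∏_{B∈ρ} wt(π|_B)`, where `wt(π|_B)` is written out as the product over
the arcs of the restriction `π|_B` (i.e. the arcs of `π` with both ends in `B`)
of `δ_{#{k∈B : i<k<j}}`. -/
def zeta {R : Type*} [CommRing R] (δ : ℕ → R) {n : ℕ}
    (π ρ : Finpartition (ground n)) : R :=
  ∏ B ∈ ρ.parts, ∏ p ∈ (arcs π).filter (fun p => p.1 ∈ B ∧ p.2 ∈ B),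
    δ ((B.filter fun k => p.1 < k ∧ k < p.2).card)

theorem zeta_eq_prod_arcs {R : Type*} [CommRing R] (δ : ℕ → R) (hδ0 : δ 0 = 1)
    (n : ℕ) (π ρ : Finpartition (ground n)) (hπ : Noncrossing π) (hρ : Noncrossing ρ)
    (hle : π ≤ ρ) :
    zeta δ π ρ =
      ∏ p ∈ arcs π,
        δ (((ground n).filter fun k =>
            p.1 < k ∧ k < p.2 ∧ SameBlock ρ p.1 k ∧ SameBlock ρ k p.2).card) := by
  classical
  set g : ℕ × ℕ → R := fun p =>
    δ (((ground n).filter fun k =>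
        p.1 < k ∧ k < p.2 ∧ SameBlock ρ p.1 k ∧ SameBlock ρ k p.2).card) with hg
  have key : ∀ B ∈ ρ.parts, ∀ p ∈ (arcs π).filter (fun p => p.1 ∈ B ∧ p.2 ∈ B),
      δ ((B.filter fun k => p.1 < k ∧ k < p.2).card) = g p := by
    intro B hB p hp
    rw [mem_filter] at hp
    obtain ⟨hparc, h1, h2⟩ := hp
    congr 1
    congr 1
    apply Finset.ext
    intro k
    simp only [mem_filter]
    constructor
    · rintro ⟨hkB, hik, hkj⟩
      exact ⟨(ρ.le hB) hkB, hik, hkj, ⟨B, hB, h1, hkB⟩, ⟨B, hB, hkB, h2⟩⟩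
    · rintro ⟨hk, hik, hkj, ⟨C, hC, hiC, hkC⟩, -⟩
      have : C = B := ρ.eq_of_mem_parts hC hB hiC h1
      exact ⟨this ▸ hkC, hik, hkj⟩
  calc zeta δ π ρ
      = ∏ B ∈ ρ.parts, ∏ p ∈ (arcs π).filter (fun p => p.1 ∈ B ∧ p.2 ∈ B), g p := by
        exact Finset.prod_congr rfl fun B hB => Finset.prod_congr rfl (key B hB)
    _ = ∏ p ∈ ρ.parts.biUnion (fun B => (arcs π).filter (fun p => p.1 ∈ B ∧ p.2 ∈ B)), g p := by
        rw [Finset.prod_biUnion]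
        intro B hB B' hB' hne
        simp only [Finset.disjoint_left, mem_filter]
        rintro p ⟨-, h1, -⟩ ⟨-, h1', -⟩
        exact hne (ρ.eq_of_mem_parts hB hB' h1 h1')
    _ = ∏ p ∈ arcs π, g p := by
        congr 1
        apply Finset.ext
        intro p
        simp only [Finset.mem_biUnion, mem_filter]
        constructor
        · rintro ⟨B, hB, hp, -⟩; exact hp
        · intro hp
          have hp' := hp
          rw [arcs, mem_filter] at hp'
          obtain ⟨-, -, ⟨A, hA, h1, h2⟩, -⟩ := hp'
          obtain ⟨B, hB, hAB⟩ := hle hA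
          exact ⟨B, hB, hp, hAB h1, hAB h2⟩
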